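/- Let n ≥ 2 and let V be the vector space over ℂ with basis indexed by n-element subsets of {1, ..., 2n-1}. Define a linear map φ: V → V by φ(v_S) = Σ_T c(S,T) v_T, where c(S,S) = 1, c(S,T) = (-1)^d if S ∩ T = {d} with S ≠ T, and c(S,T) = 0 otherwise. Then the matrix of φ is well-defined and for n = 2, the kernel of φ has dimension 2 (the 2nd Catalan number). -/

import Mathlib

/-- The matrix entry `⟨φ(v_S), v_T⟩` of the Jacobi-relation operator `φ` on
`V_{n,3}`: it is `1` if `S = T`, `(-1)^d` if `S ∩ T = {d}` with `S ≠ T`, and `0`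
otherwise. -/
noncomputable def phiCoeff (S T : Finset ℕ) : ℂ :=
  if S = T then 1
  else if (S ∩ T).card = 1 then ∑ d ∈ S ∩ T, (-1 : ℂ) ^ d
  else 0

/-- The index type: `n`-element subsets of `{1, …, 2n-1}`. -/
abbrev SubsetIdx (n : ℕ) := {S // S ∈ (Finset.Icc 1 (2 * n - 1)).powersetCard n}

/-- The matrix of `φ` in the basis `{v_S}`: `φ(v_S) = ∑_T ⟨φ(v_S), v_T⟩ v_T`. -/
noncomputable def phiMatrix (n : ℕ) : Matrix (SubsetIdx n) (SubsetIdx n) ℂ :=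
  Matrix.of fun T S => phiCoeff S.val T.val

namespace KerPhiAux

abbrev ι := SubsetIdx 2

def a : ι := ⟨{1,2}, by decide⟩
def b : ι := ⟨{1,3}, by decide⟩
def c : ι := ⟨{2,3}, by decide⟩

lemma univ_eq : (Finset.univ : Finset ι) = {a, b, c} := by decide

lemma coeff_of_ne (S T : Finset ℕ) (hne : S ≠ T) (d : ℕ) (h : S ∩ T = {d}) :
    phiCoeff S T = (-1 : ℂ) ^ d := by
  simp [phiCoeff, hne, h]

lemma coeff_self (S : Finset ℕ) : phiCoeff S S = 1 := by simp [phiCoeff]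

lemma cab : phiCoeff a.1 b.1 = -1 := by
  rw [coeff_of_ne _ _ (by decide) 1 (by decide)]; norm_num
lemma cba : phiCoeff b.1 a.1 = -1 := by
  rw [coeff_of_ne _ _ (by decide) 1 (by decide)]; norm_num
lemma cac : phiCoeff a.1 c.1 = 1 := by
  rw [coeff_of_ne _ _ (by decide) 2 (by decide)]; norm_num
lemma cca : phiCoeff c.1 a.1 = 1 := by
  rw [coeff_of_ne _ _ (by decide) 2 (by decide)]; norm_num
lemma cbc : phiCoeff b.1 c.1 = -1 := by
  rw [coeff_of_ne _ _ (by decide) 3 (by decide)]; norm_num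
lemma ccb : phiCoeff c.1 b.1 = -1 := by
  rw [coeff_of_ne _ _ (by decide) 3 (by decide)]; norm_num

lemma mulVec_eval (x : ι → ℂ) (T : ι) :
    (phiMatrix 2).mulVec x T =
      phiCoeff a.1 T.1 * x a + phiCoeff b.1 T.1 * x b + phiCoeff c.1 T.1 * x c := by
  show ∑ S : ι, phiCoeff S.1 T.1 * x S = _
  rw [univ_eq]
  rw [Finset.sum_insert (by decide), Finset.sum_insert (by decide), Finset.sum_singleton]
  ring

noncomputable def f : (ι → ℂ) →ₗ[ℂ] ℂ :=
  (LinearMap.proj a : (ι → ℂ) →ₗ[ℂ] ℂ) - (LinearMap.proj b : (ι → ℂ) →ₗ[ℂ] ℂ)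
    + (LinearMap.proj c : (ι → ℂ) →ₗ[ℂ] ℂ)

lemma f_apply (x : ι → ℂ) : f x = x a - x b + x c := rfl

lemma ker_eq : LinearMap.ker (phiMatrix 2).mulVecLin = LinearMap.ker f := by
  ext x
  simp only [LinearMap.mem_ker, Matrix.mulVecLin_apply, f_apply]
  constructor
  · intro h
    have := congrFun h a
    rw [mulVec_eval] at this
    rw [coeff_self, cba, cca] at this
    simp at this; linear_combination this
  · intro h
    funext T
    rw [mulVec_eval]
    have hT : T = a ∨ T = b ∨ T = c := by
      have : T ∈ (Finset.univ : Finset ι) := Finset.mem_univ T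
      rw [univ_eq] at this
      simpa using this
    rcases hT with rfl | rfl | rfl
    · rw [coeff_self, cba, cca]; simp; linear_combination h
    · rw [coeff_self, cab, ccb]; simp; linear_combination -h
    · rw [coeff_self, cac, cbc]; simp; linear_combination h

lemma range_f : LinearMap.range f = ⊤ := by
  rw [LinearMap.range_eq_top]
  intro z
  refine ⟨Pi.single a z, ?_⟩
  rw [f_apply]
  simp [Pi.single_apply, if_neg (by decide : ¬ b = a), if_neg (by decide : ¬ c = a)]

end KerPhiAux

/-- Let `V` be the complex vector space with basis `{v_S}` indexed by the
`2`-element subsets of `{1, 2, 3}`, and let `φ : V → V` be the well-defined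
linear map with matrix entries `⟨φ(v_S), v_T⟩ = 1` if `S = T`, `(-1)^d` if
`S ∩ T = {d}` with `S ≠ T`, and `0` otherwise.  Then the kernel of `φ` has
dimension `2`, the second Catalan number. -/
theorem ker_phi_n2_dim_two :
    Module.finrank ℂ (LinearMap.ker (phiMatrix 2).mulVecLin) = 2 ∧ catalan 2 = 2 := by
  refine ⟨?_, catalan_two⟩
  rw [KerPhiAux.ker_eq]
  have h := LinearMap.finrank_range_add_finrank_ker KerPhiAux.f
  rw [KerPhiAux.range_f] at h
  have hd : Module.finrank ℂ (KerPhiAux.ι → ℂ) = 3 := by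
    rw [Module.finrank_pi]; decide
  rw [finrank_top, Module.finrank_self, hd] at h
  exact Nat.add_left_cancel h
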